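/- arXiv:2204.00924 — 5 statements merged into one kernel-verified Lean document; each statement's English description precedes it below -/
import Mathlib

section
/- Let R be a commutative associative ring with identity and let S_{10} := {x_0^{10} − 2x_1^5 + 5x_2^2 mod 10R ∣ x_0, x_1, x_2 ∈ R} ⊆ R/10R. Then S_{10} is an additive subgroup of R/10R; that is, S_{10} contains 0, is closed under addition, and is closed under negation (equivalently, the set {x_0^{10} − 2x_1^5 + 5x_2^2 + 10x_3 ∣ x_0, x_1, x_2, x_3 ∈ R} is an additive subgroup of R). -/
set_option maxHeartbeats 1000000

private lemma ten_of_two_five {R : Type*} [CommRing R] {z : R}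
    (h2 : (2 : R) ∣ z) (h5 : (5 : R) ∣ z) : (10 : R) ∣ z := by
  obtain ⟨x, hx⟩ := h2
  obtain ⟨y, hy⟩ := h5
  exact ⟨x - 2 * y, by linear_combination 5 * hx - 4 * hy⟩

private lemma add_witness {R : Type*} [CommRing R] (a b c d f g s u v w : R)
    (hs : s = a ^ 5 + c + d ^ 5 + g) (hu : u = 5 * s - 4 * (a + d))
    (hv : v = b + f + a * d) (hw : w = s - u ^ 5) :
    (10 : R) ∣ (a ^ 10 - 2 * b ^ 5 + 5 * c ^ 2 + (d ^ 10 - 2 * f ^ 5 + 5 * g ^ 2))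
      - (u ^ 10 - 2 * v ^ 5 + 5 * w ^ 2) := by
  apply ten_of_two_five
  · refine ⟨(-3)*u^10 + 5*g*u^5 + 5*d^5*u^5 + (-5)*d^5*g + (-2)*d^10 + 5*c*u^5 + (-5)*c*g + (-5)*c*d^5 + 5*b*f^4 + 10*b^2*f^3 + 10*b^3*f^2 + 5*b^4*f + 5*a*d*f^4 + 20*a*b*d*f^3 + 30*a*b^2*d*f^2 + 20*a*b^3*d*f + 5*a*b^4*d + 10*a^2*d^2*f^3 + 30*a^2*b*d^2*f^2 + 30*a^2*b^2*d^2*f + 10*a^2*b^3*d^2 + 10*a^3*d^3*f^2 + 20*a^3*b*d^3*f + 10*a^3*b^2*d^3 + 5*a^4*d^4*f + 5*a^4*b*d^4 + 5*a^5*u^5 + (-5)*a^5*g + (-4)*a^5*d^5 + (-5)*a^5*c + (-2)*a^10, ?_⟩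
    subst hv hw hs
    ring
  · have h1 : (5 : R) ∣ u - (a + d) := ⟨s - (a + d), by rw [hu]; ring⟩
    have h2 : (5 : R) ∣ u ^ 10 - (a + d) ^ 10 :=
      dvd_trans h1 (sub_dvd_pow_sub_pow u (a + d) 10)
    have h3 : (5 : R) ∣ (a ^ 10 - 2 * b ^ 5 + 5 * c ^ 2 + (d ^ 10 - 2 * f ^ 5 + 5 * g ^ 2))
        - ((a + d) ^ 10 - 2 * v ^ 5 + 5 * w ^ 2) := by
      refine ⟨(-1)*w^2 + g^2 + c^2 + 2*b*f^4 + 4*b^2*f^3 + 4*b^3*f^2 + 2*b^4*f + 2*a*d*f^4 + (-2)*a*d^9 + 8*a*b*d*f^3 + 12*a*b^2*d*f^2 + 8*a*b^3*d*f + 2*a*b^4*d + 4*a^2*d^2*f^3 + (-9)*a^2*d^8 + 12*a^2*b*d^2*f^2 + 12*a^2*b^2*d^2*f + 4*a^2*b^3*d^2 + 4*a^3*d^3*f^2 + (-24)*a^3*d^7 + 8*a^3*b*d^3*f + 4*a^3*b^2*d^3 + 2*a^4*d^4*f + (-42)*a^4*d^6 + 2*a^4*b*d^4 + (-50)*a^5*d^5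 + (-42)*a^6*d^4 + (-24)*a^7*d^3 + (-9)*a^8*d^2 + (-2)*a^9*d, ?_⟩
      subst hv
      ring
    have h4 := dvd_sub h3 h2
    have heq : (a ^ 10 - 2 * b ^ 5 + 5 * c ^ 2 + (d ^ 10 - 2 * f ^ 5 + 5 * g ^ 2))
        - ((a + d) ^ 10 - 2 * v ^ 5 + 5 * w ^ 2) - (u ^ 10 - (a + d) ^ 10)
        = (a ^ 10 - 2 * b ^ 5 + 5 * c ^ 2 + (d ^ 10 - 2 * f ^ 5 + 5 * g ^ 2))
        - (u ^ 10 - 2 * v ^ 5 + 5 * w ^ 2) := by ring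
    rwa [heq] at h4

private lemma neg_witness {R : Type*} [CommRing R] (a b c : R) :
    (10 : R) ∣ -(a ^ 10 - 2 * b ^ 5 + 5 * c ^ 2)
      - ((2 * a) ^ 10 - 2 * (-b) ^ 5 + 5 * (c - 31 * a ^ 5) ^ 2) := by
  exact ⟨-(c^2 + (-31)*a^5*c + 583*a^10), by ring⟩

theorem stmt_3 (R : Type*) [CommRing R] :
    ∃ S : AddSubgroup (R ⧸ Ideal.span {(10 : R)}),
      (S : Set (R ⧸ Ideal.span {(10 : R)})) =
        { y | ∃ x₀ x₁ x₂ : R,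
          y = Ideal.Quotient.mk (Ideal.span {(10 : R)})
                (x₀ ^ 10 - 2 * x₁ ^ 5 + 5 * x₂ ^ 2) } := by
  set I := Ideal.span {(10 : R)} with hI
  have key : ∀ x y : R, (10 : R) ∣ x - y →
      Ideal.Quotient.mk I x = Ideal.Quotient.mk I y := by
    intro x y h
    exact Ideal.Quotient.eq.mpr (Ideal.mem_span_singleton.mpr h)
  refine ⟨⟨⟨⟨{ y | ∃ x₀ x₁ x₂ : R,
      y = Ideal.Quotient.mk I (x₀ ^ 10 - 2 * x₁ ^ 5 + 5 * x₂ ^ 2) }, ?_⟩, ?_⟩, ?_⟩, rfl⟩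
  · -- add_mem'
    rintro x y ⟨a, b, c, rfl⟩ ⟨d, f, g, rfl⟩
    refine ⟨5 * (a ^ 5 + c + d ^ 5 + g) - 4 * (a + d), b + f + a * d,
      (a ^ 5 + c + d ^ 5 + g) - (5 * (a ^ 5 + c + d ^ 5 + g) - 4 * (a + d)) ^ 5, ?_⟩
    rw [← map_add]
    exact key _ _ (add_witness a b c d f g _ _ _ _ rfl rfl rfl rfl)
  · -- zero_mem'
    exact ⟨0, 0, 0, by norm_num⟩
  · -- neg_mem'
    rintro x ⟨a, b, c, rfl⟩
    refine ⟨2 * a, -b, c - 31 * a ^ 5, ?_⟩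
    rw [← map_neg]
    exact key _ _ (neg_witness a b c)
end

section
/- Let R be a commutative associative ring with identity and let S_{12} := {x_0^{12} + 2x_1^6 − 3x_2^4 − 4x_3^3 + 6x_4^2 mod 12R ∣ x_0, x_1, x_2, x_3, x_4 ∈ R} ⊆ R/12R. Then S_{12} is an additive subgroup of R/12R; that is, S_{12} contains 0, is closed under addition, and is closed under negation (equivalently, the set {x_0^{12} + 2x_1^6 − 3x_2^4 − 4x_3^3 + 6x_4^2 + 12x_5 ∣ x_0, x_1, x_2, x_3, x_4, x_5 ∈ R} is an additive subgroup of R). -/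
set_option maxHeartbeats 10000000 in
set_option maxRecDepth 100000 in
theorem stmt_4 (R : Type*) [CommRing R] :
    ∃ S : AddSubgroup (R ⧸ Ideal.span {(12 : R)}),
      (S : Set (R ⧸ Ideal.span {(12 : R)})) =
        { y | ∃ x₀ x₁ x₂ x₃ x₄ : R,
          y = Ideal.Quotient.mk (Ideal.span {(12 : R)})
                (x₀ ^ 12 + 2 * x₁ ^ 6 - 3 * x₂ ^ 4 - 4 * x₃ ^ 3 + 6 * x₄ ^ 2) } := by
  refine ⟨{
    carrier := { y | ∃ x₀ x₁ x₂ x₃ x₄ : R,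
          y = Ideal.Quotient.mk (Ideal.span {(12 : R)})
                (x₀ ^ 12 + 2 * x₁ ^ 6 - 3 * x₂ ^ 4 - 4 * x₃ ^ 3 + 6 * x₄ ^ 2) }
    zero_mem' := ⟨0, 0, 0, 0, 0, by norm_num⟩
    add_mem' := ?_
    neg_mem' := ?_ }, rfl⟩
  · rintro y z ⟨a0, a1, a2, a3, a4, rfl⟩ ⟨b0, b1, b2, b3, b4, rfl⟩
    refine ⟨0, 0, a0^3 + a2 + b0^3 + b2,
      a3 + b3 - a0^4 - b0^4 - 2*a1^2 - 2*b1^2,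
      a1^3 + a4 + b1^3 + b4 + a0^3*a2 + b0^3*b2 + (a0^3+a2)*(b0^3+b2), ?_⟩
    rw [← map_add, Ideal.Quotient.eq, Ideal.mem_span_singleton']
    exact ⟨(-2)*b1^2*b3^2 + (-1)*b1^3*b4^1 + (4)*b1^4*b3^1 + (-3)*b1^6 + (-1)*b0^3*b2^1*b4^1 + (1)*b0^3*b2^3 + (-1)*b0^3*b1^3*b2^1 + (-1)*b0^4*b3^2 + (4)*b0^4*b1^2*b3^1 + (-4)*b0^4*b1^4 + (1)*b0^6*b2^2 + (1)*b0^8*b3^1 + (-2)*b0^8*b1^2 + (1)*b0^9*b2^1 + (-1)*a4^1*b4^1 + (-1)*a4^1*b1^3 + (-1)*a4^1*b0^3*b2^1 + (1)*a3^1*b3^2 + (-4)*a3^1*b1^2*b3^1 + (4)*a3^1*b1^4 + (-2)*a3^1*b0^4*b3^1 + (4)*a3^1*b0^4*b1^2 + (1)*a3^1*b0^8 + (1)*a3^2*b3^1 + (-2)*a3^2*b1^2 + (-1)*a3^2*b0^4 + (-1)*a2^1*b2^1*b4^1 + (1)*a2^1*b2^3 + (-1)*a2^1*b1^3*b2^1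 + (-1)*a2^1*b0^3*b4^1 + (2)*a2^1*b0^3*b2^2 + (-1)*a2^1*b0^3*b1^3 + (2)*a2^1*b0^6*b2^1 + (1)*a2^1*b0^9 + (-1)*a2^1*a4^1*b2^1 + (-1)*a2^1*a4^1*b0^3 + (1)*a2^2*b2^2 + (2)*a2^2*b0^3*b2^1 + (1)*a2^2*b0^6 + (1)*a2^3*b2^1 + (1)*a2^3*b0^3 + (-2)*a1^2*b3^2 + (8)*a1^2*b1^2*b3^1 + (-8)*a1^2*b1^4 + (4)*a1^2*b0^4*b3^1 + (-8)*a1^2*b0^4*b1^2 + (-2)*a1^2*b0^8 + (-4)*a1^2*a3^1*b3^1 + (8)*a1^2*a3^1*b1^2 + (4)*a1^2*a3^1*b0^4 + (-2)*a1^2*a3^2 + (-1)*a1^3*b4^1 + (-1)*a1^3*b1^3 + (-1)*a1^3*b0^3*b2^1 + (-1)*a1^3*a4^1 + (-1)*a1^3*a2^1*b2^1 + (-1)*a1^3*a2^1*b0^3 + (4)*a1^4*b3^1 + (-8)*a1^4*b1^2 + (-4)*a1^4*b0^4 + (4)*a1^4*a3^1 + (-3)*a1^6 + (-1)*a0^3*b2^1*b4^1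 + (1)*a0^3*b2^3 + (-1)*a0^3*b1^3*b2^1 + (-1)*a0^3*b0^3*b4^1 + (2)*a0^3*b0^3*b2^2 + (-1)*a0^3*b0^3*b1^3 + (2)*a0^3*b0^6*b2^1 + (1)*a0^3*b0^9 + (-1)*a0^3*a4^1*b2^1 + (-1)*a0^3*a4^1*b0^3 + (-1)*a0^3*a2^1*b4^1 + (2)*a0^3*a2^1*b2^2 + (-1)*a0^3*a2^1*b1^3 + (3)*a0^3*a2^1*b0^3*b2^1 + (2)*a0^3*a2^1*b0^6 + (-1)*a0^3*a2^1*a4^1 + (2)*a0^3*a2^2*b2^1 + (2)*a0^3*a2^2*b0^3 + (1)*a0^3*a2^3 + (-1)*a0^3*a1^3*b2^1 + (-1)*a0^3*a1^3*b0^3 + (-1)*a0^3*a1^3*a2^1 + (-1)*a0^4*b3^2 + (4)*a0^4*b1^2*b3^1 + (-4)*a0^4*b1^4 + (2)*a0^4*b0^4*b3^1 + (-4)*a0^4*b0^4*b1^2 + (-1)*a0^4*b0^8 + (-2)*a0^4*a3^1*b3^1 + (4)*a0^4*a3^1*b1^2 + (2)*a0^4*a3^1*b0^4 + (-1)*a0^4*a3^2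 + (4)*a0^4*a1^2*b3^1 + (-8)*a0^4*a1^2*b1^2 + (-4)*a0^4*a1^2*b0^4 + (4)*a0^4*a1^2*a3^1 + (-4)*a0^4*a1^4 + (1)*a0^6*b2^2 + (2)*a0^6*b0^3*b2^1 + (1)*a0^6*b0^6 + (2)*a0^6*a2^1*b2^1 + (2)*a0^6*a2^1*b0^3 + (1)*a0^6*a2^2 + (1)*a0^8*b3^1 + (-2)*a0^8*b1^2 + (-1)*a0^8*b0^4 + (1)*a0^8*a3^1 + (-2)*a0^8*a1^2 + (1)*a0^9*b2^1 + (1)*a0^9*b0^3 + (1)*a0^9*a2^1, by ring⟩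
  · rintro y ⟨a0, a1, a2, a3, a4, rfl⟩
    refine ⟨0, 0, a0^3 + a2, a0^4 + 2*a1^2 - a3,
      (a0^3+a2)^2 + a0^3*a2 + a1^3 + a4, ?_⟩
    rw [← map_neg, Ideal.Quotient.eq, Ideal.mem_span_singleton']
    exact ⟨(-1)*a4^2 + (-1)*a2^2*a4^1 + (2)*a1^2*a3^2 + (-1)*a1^3*a4^1 + (-1)*a1^3*a2^2 + (-4)*a1^4*a3^1 + (2)*a1^6 + (-3)*a0^3*a2^1*a4^1 + (-2)*a0^3*a2^3 + (-3)*a0^3*a1^3*a2^1 + (1)*a0^4*a3^2 + (-4)*a0^4*a1^2*a3^1 + (4)*a0^4*a1^4 + (-1)*a0^6*a4^1 + (-4)*a0^6*a2^2 + (-1)*a0^6*a1^3 + (-1)*a0^8*a3^1 + (2)*a0^8*a1^2 + (-2)*a0^9*a2^1, by ring⟩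
end

section
/- Let R be a commutative associative ring with identity and let S_{14} := {x_0^{14} − 2x_1^7 + 7x_2^2 mod 14R ∣ x_0, x_1, x_2 ∈ R} ⊆ R/14R. Then S_{14} is an additive subgroup of R/14R; that is, S_{14} contains 0, is closed under addition, and is closed under negation (equivalently, the set {x_0^{14} − 2x_1^7 + 7x_2^2 + 14x_3 ∣ x_0, x_1, x_2, x_3 ∈ R} is an additive subgroup of R). -/
theorem stmt_5 (R : Type*) [CommRing R] :
    ∃ S : AddSubgroup (R ⧸ Ideal.span {(14 : R)}),
      (S : Set (R ⧸ Ideal.span {(14 : R)})) =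
        { y | ∃ x₀ x₁ x₂ : R,
          y = Ideal.Quotient.mk (Ideal.span {(14 : R)})
                (x₀ ^ 14 - 2 * x₁ ^ 7 + 7 * x₂ ^ 2) } := by
  set I := Ideal.span {(14 : R)} with hI
  let mk := Ideal.Quotient.mk I
  have hmem : ∀ r : R, r ∈ I ↔ (14 : R) ∣ r := fun r => Ideal.mem_span_singleton
  -- additive hom f (a, b) = mk (7 a² + 8 b⁷)
  let f : R × R →+ R ⧸ I :=
    { toFun := fun p => mk (7 * p.1 ^ 2 + 8 * p.2 ^ 7)
      map_zero' := by
        simp only [Prod.fst_zero, Prod.snd_zero]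
        have : (7 * (0:R) ^ 2 + 8 * 0 ^ 7) = 0 := by ring
        rw [this, map_zero]
      map_add' := by
        rintro ⟨a,b⟩ ⟨c,d⟩
        show mk (7*(a+c)^2 + 8*(b+d)^7) = mk _ + mk _
        rw [← map_add]
        refine Ideal.Quotient.eq.mpr ((hmem _).mpr ?_)
        refine ⟨a * c + 4 * (b ^ 6 * d + 3 * b ^ 5 * d ^ 2
          + 5 * b ^ 4 * d ^ 3 + 5 * b ^ 3 * d ^ 4
          + 3 * b ^ 2 * d ^ 5 + b * d ^ 6), ?_⟩
        ring }
  refine ⟨f.range, ?_⟩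
  ext y
  simp only [AddMonoidHom.coe_range, Set.mem_range, Set.mem_setOf_eq]
  constructor
  · rintro ⟨⟨a, b⟩, rfl⟩
    refine ⟨0, 3 * b, a, ?_⟩
    show mk _ = mk _
    refine Ideal.Quotient.eq.mpr ((hmem _).mpr ⟨313 * b ^ 7, ?_⟩)
    ring
  · rintro ⟨x₀, x₁, x₂, rfl⟩
    refine ⟨(x₀ ^ 7 + x₂, x₀ ^ 2 - 2 * x₁), ?_⟩
    show mk _ = mk _
    refine Ideal.Quotient.eq.mpr ((hmem _).mpr
      ⟨(-73)*x₁^7 + 256*x₀^2*x₁^6 + (-384)*x₀^4*x₁^5 + 320*x₀^6*x₁^4 + x₀^7*x₂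
        + (-160)*x₀^8*x₁^3 + 48*x₀^10*x₁^2 + (-8)*x₀^12*x₁ + x₀^14, ?_⟩)
    ring
end

section
/- Let R be a commutative associative ring with identity and let S_{15} := {x_0^{15} − 3x_1^5 + 5x_2^3 mod 15R ∣ x_0, x_1, x_2 ∈ R} ⊆ R/15R. Then S_{15} is an additive subgroup of R/15R; that is, S_{15} contains 0, is closed under addition, and is closed under negation (equivalently, the set {x_0^{15} − 3x_1^5 + 5x_2^3 + 15x_3 ∣ x_0, x_1, x_2, x_3 ∈ R} is an additive subgroup of R). -/
set_option maxHeartbeats 2000000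

theorem stmt_6 (R : Type*) [CommRing R] :
    ∃ S : AddSubgroup (R ⧸ Ideal.span {(15 : R)}),
      (S : Set (R ⧸ Ideal.span {(15 : R)})) =
        { y | ∃ x₀ x₁ x₂ : R,
          y = Ideal.Quotient.mk (Ideal.span {(15 : R)})
                (x₀ ^ 15 - 3 * x₁ ^ 5 + 5 * x₂ ^ 3) } := by
  refine ⟨{
    carrier := { y | ∃ x₀ x₁ x₂ : R,
      y = Ideal.Quotient.mk (Ideal.span {(15 : R)})
            (x₀ ^ 15 - 3 * x₁ ^ 5 + 5 * x₂ ^ 3) },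
    zero_mem' := ⟨0, 0, 0, by norm_num⟩,
    add_mem' := ?_,
    neg_mem' := ?_ }, rfl⟩
  · rintro p q ⟨a, b, c, rfl⟩ ⟨d, e, f, rfl⟩
    refine ⟨0, 3 * (a^3 + d^3 + 2*b + 2*e), 2 * (a^5 + d^5 + 2*c + 2*f), ?_⟩
    rw [← map_add, Ideal.Quotient.eq, Ideal.mem_span_singleton]
    exact ⟨(-21)*f^3 + (1555)*e^5 + (3888)*d^3*e^4 + (-32)*d^5*f^2 + (3888)*d^6*e^3 + (1944)*d^9*e^2 + (-16)*d^10*f + (486)*d^12*e + (46)*d^15 + (-64)*c*f^2 + (-64)*c*d^5*f + (-16)*c*d^10 + (-64)*c^2*f + (-32)*c^2*d^5 + (-21)*c^3 + (7776)*b*e^4 + (15552)*b*d^3*e^3 + (11664)*b*d^6*e^2 + (3888)*b*d^9*e + (486)*b*d^12 + (15552)*b^2*e^3 + (23328)*b^2*d^3*e^2 + (11664)*b^2*d^6*e + (1944)*b^2*d^9 + (15552)*b^3*e^2 + (15552)*b^3*d^3*e + (3888)*b^3*d^6 + (7776)*b^4*e + (3888)*b^4*d^3 + (1555)*b^5 +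 (3888)*a^3*e^4 + (7776)*a^3*d^3*e^3 + (5832)*a^3*d^6*e^2 + (1944)*a^3*d^9*e + (243)*a^3*d^12 + (15552)*a^3*b*e^3 + (23328)*a^3*b*d^3*e^2 + (11664)*a^3*b*d^6*e + (1944)*a^3*b*d^9 + (23328)*a^3*b^2*e^2 + (23328)*a^3*b^2*d^3*e + (5832)*a^3*b^2*d^6 + (15552)*a^3*b^3*e + (7776)*a^3*b^3*d^3 + (3888)*a^3*b^4 + (-32)*a^5*f^2 + (-32)*a^5*d^5*f + (-8)*a^5*d^10 + (-64)*a^5*c*f + (-32)*a^5*c*d^5 + (-32)*a^5*c^2 + (3888)*a^6*e^3 + (5832)*a^6*d^3*e^2 + (2916)*a^6*d^6*e + (486)*a^6*d^9 + (11664)*a^6*b*e^2 + (11664)*a^6*b*d^3*e + (2916)*a^6*b*d^6 + (11664)*a^6*b^2*e + (5832)*a^6*b^2*d^3 + (3888)*a^6*b^3 + (1944)*a^9*e^2 + (1944)*a^9*d^3*e + (486)*a^9*d^6 + (3888)*a^9*b*e + (1944)*a^9*b*d^3 + (1944)*a^9*b^2 + (-16)*a^10*f + (-8)*a^10*d^5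 + (-16)*a^10*c + (486)*a^12*e + (243)*a^12*d^3 + (486)*a^12*b + (46)*a^15, by ring⟩
  · rintro p ⟨a, b, c, rfl⟩
    exact ⟨-a, -b, -c, by rw [← map_neg]; exact congrArg _ (by ring)⟩
end

section
/- Let R be a commutative associative ring with identity and M ∈ M_2(R). If M is a sum of 12th powers of matrices in M_2(R), then there exist x_0, x_1, x_2, x_3, x_4, x_5 ∈ R such that tr(M) = x_0^{12} + 2x_1^6 − 3x_2^4 − 4x_3^3 + 6x_4^2 + 12x_5. -/
section
variable {R : Type*} [CommRing R]

private def Qf (y : R) : Prop :=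
  ∃ x₀ x₁ x₂ x₃ x₄ x₅ : R,
    y = x₀ ^ 12 + 2 * x₁ ^ 6 - 3 * x₂ ^ 4 - 4 * x₃ ^ 3 + 6 * x₄ ^ 2 + 12 * x₅

private lemma Qf_zero : Qf (0 : R) := ⟨0, 0, 0, 0, 0, 0, by ring⟩

private lemma merge12 (a a' : R) : ∃ q4 q3 q2 h : R,
    a^12 + a'^12 = (a+a')^12 + 2*(a*a')^6 - 3*q4^4 - 4*q3^3 + 6*q2^2 + 12*h :=
  ⟨(a+a')*(a*a'), (a+a')^2*(a*a'), (a+a')^4*(a*a'),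
    -(a+a')^10*(a*a') + 4*(a+a')^8*(a*a')^2 - 9*(a+a')^6*(a*a')^3
      + 9*(a+a')^4*(a*a')^4 - 3*(a+a')^2*(a*a')^5, by ring⟩

private lemma merge6 (u v : R) : ∃ q3 q2 h : R,
    2*u^6 + 2*v^6 = 2*(u+v)^6 - 4*q3^3 + 6*q2^2 + 12*h :=
  ⟨u*v, (u+v)*(u*v), (u+v)^2*(u*v)^2 - (u+v)^4*(u*v), by ring⟩

private lemma merge4 (u v : R) : ∃ q2 h : R,
    3*u^4 + 3*v^4 = 3*(u+v)^4 - 6*q2^2 - 12*h :=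
  ⟨u*v, (u+v)^2*(u*v) - (u*v)^2, by ring⟩

private lemma merge3 (u v : R) : ∃ h : R, 4*u^3 + 4*v^3 = 4*(u+v)^3 - 12*h :=
  ⟨u*v*(u+v), by ring⟩

private lemma merge2 (u v : R) : ∃ h : R, 6*u^2 + 6*v^2 = 6*(u+v)^2 - 12*h :=
  ⟨u*v, by ring⟩

private lemma Qf_add {y z : R} (hy : Qf y) (hz : Qf z) : Qf (y + z) := by
  obtain ⟨a, b, c, e, f, g, rfl⟩ := hy
  obtain ⟨a', b', c', e', f', g', rfl⟩ := hz
  obtain ⟨q4, q3, q2, h0, H12⟩ := merge12 a a'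
  obtain ⟨r3, r2, h1, H6a⟩ := merge6 b b'
  obtain ⟨s3, s2, h2, H6b⟩ := merge6 (b+b') (a*a')
  obtain ⟨u2, h3, H4a⟩ := merge4 c c'
  obtain ⟨v2, h4, H4b⟩ := merge4 (c+c') q4
  obtain ⟨k1, H3a⟩ := merge3 e e'
  obtain ⟨k2, H3b⟩ := merge3 (e+e') q3
  obtain ⟨k3, H3c⟩ := merge3 (e+e'+q3) r3
  obtain ⟨k4, H3d⟩ := merge3 (e+e'+q3+r3) s3
  obtain ⟨m1, H2a⟩ := merge2 f f'
  obtain ⟨m2, H2b⟩ := merge2 (f+f') q2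
  obtain ⟨m3, H2c⟩ := merge2 (f+f'+q2) r2
  obtain ⟨m4, H2d⟩ := merge2 (f+f'+q2+r2) s2
  obtain ⟨m5, H2e⟩ := merge2 (f+f'+q2+r2+s2) u2
  obtain ⟨m6, H2f⟩ := merge2 (f+f'+q2+r2+s2+u2) v2
  refine ⟨a+a', b+b'+a*a', c+c'+q4, e+e'+q3+r3+s3, f+f'+q2+r2+s2+u2+v2,
    g+g'+h0+h1+h2+h3+h4+k1+k2+k3+k4-m1-m2-m3-m4-m5-m6, ?_⟩
  linear_combination H12 + H6a + H6b - H4a - H4b - H3a - H3b - H3c - H3d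
    + H2a + H2b + H2c + H2d + H2e + H2f

private lemma Qf_trace_pow (A : Matrix (Fin 2) (Fin 2) R) : Qf ((A ^ 12).trace) := by
  set t := A.trace with ht
  set δ := A.det with hδ
  have sq : A * A = t • A - δ • (1 : Matrix (Fin 2) (Fin 2) R) := by
    ext i j
    fin_cases i <;> fin_cases j <;>
      simp [Matrix.mul_apply, Matrix.trace, Matrix.det_fin_two, Fin.sum_univ_two,
        Matrix.one_apply, ht, hδ, Matrix.diag] <;> ring
  have key : ∀ n : ℕ, (A ^ (n+2)).trace = t * (A ^ (n+1)).trace - δ * (A ^ n).trace := by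
    intro n
    have hp : A ^ (n+2) = t • A ^ (n+1) - δ • A ^ n := by
      rw [pow_add, pow_two, sq, Matrix.mul_sub, Matrix.mul_smul, Matrix.mul_smul, Matrix.mul_one,
        ← pow_succ]
    rw [hp, Matrix.trace_sub, Matrix.trace_smul, Matrix.trace_smul, smul_eq_mul,
      smul_eq_mul]
  have t0 : (A ^ 0).trace = 2 := by
    rw [pow_zero]
    simp [Matrix.trace_one]
  have t1 : (A ^ 1).trace = t := by rw [pow_one]
  have t2 : (A ^ 2).trace = t^2 + (-2)*δ := by
    have h := key 0
    rw [show (0:ℕ)+2 = 2 from rfl, show (0:ℕ)+1 = 1 from rfl] at h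
    rw [h, t1, t0]; ring
  have t3 : (A ^ 3).trace = t^3 + (-3)*t*δ := by
    have h := key 1
    rw [show (1:ℕ)+2 = 3 from rfl, show (1:ℕ)+1 = 2 from rfl] at h
    rw [h, t2, t1]; ring
  have t4 : (A ^ 4).trace = t^4 + (-4)*t^2*δ + (2)*δ^2 := by
    have h := key 2
    rw [show (2:ℕ)+2 = 4 from rfl, show (2:ℕ)+1 = 3 from rfl] at h
    rw [h, t3, t2]; ring
  have t5 : (A ^ 5).trace = t^5 + (-5)*t^3*δ + (5)*t*δ^2 := by
    have h := key 3
    rw [show (3:ℕ)+2 = 5 from rfl, show (3:ℕ)+1 = 4 from rfl] at h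
    rw [h, t4, t3]; ring
  have t6 : (A ^ 6).trace = t^6 + (-6)*t^4*δ + (9)*t^2*δ^2 + (-2)*δ^3 := by
    have h := key 4
    rw [show (4:ℕ)+2 = 6 from rfl, show (4:ℕ)+1 = 5 from rfl] at h
    rw [h, t5, t4]; ring
  have t7 : (A ^ 7).trace = t^7 + (-7)*t^5*δ + (14)*t^3*δ^2 + (-7)*t*δ^3 := by
    have h := key 5
    rw [show (5:ℕ)+2 = 7 from rfl, show (5:ℕ)+1 = 6 from rfl] at h
    rw [h, t6, t5]; ring
  have t8 : (A ^ 8).trace = t^8 + (-8)*t^6*δ + (20)*t^4*δ^2 + (-16)*t^2*δ^3 + (2)*δ^4 := by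
    have h := key 6
    rw [show (6:ℕ)+2 = 8 from rfl, show (6:ℕ)+1 = 7 from rfl] at h
    rw [h, t7, t6]; ring
  have t9 : (A ^ 9).trace = t^9 + (-9)*t^7*δ + (27)*t^5*δ^2 + (-30)*t^3*δ^3 + (9)*t*δ^4 := by
    have h := key 7
    rw [show (7:ℕ)+2 = 9 from rfl, show (7:ℕ)+1 = 8 from rfl] at h
    rw [h, t8, t7]; ring
  have t10 : (A ^ 10).trace = t^10 + (-10)*t^8*δ + (35)*t^6*δ^2 + (-50)*t^4*δ^3 + (25)*t^2*δ^4 + (-2)*δ^5 := by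
    have h := key 8
    rw [show (8:ℕ)+2 = 10 from rfl, show (8:ℕ)+1 = 9 from rfl] at h
    rw [h, t9, t8]; ring
  have t11 : (A ^ 11).trace = t^11 + (-11)*t^9*δ + (44)*t^7*δ^2 + (-77)*t^5*δ^3 + (55)*t^3*δ^4 + (-11)*t*δ^5 := by
    have h := key 9
    rw [show (9:ℕ)+2 = 11 from rfl, show (9:ℕ)+1 = 10 from rfl] at h
    rw [h, t10, t9]; ring
  have t12 : (A ^ 12).trace = t^12 + (-12)*t^10*δ + (54)*t^8*δ^2 + (-112)*t^6*δ^3 + (105)*t^4*δ^4 + (-36)*t^2*δ^5 + (2)*δ^6 := by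
    have h := key 10
    rw [show (10:ℕ)+2 = 12 from rfl, show (10:ℕ)+1 = 11 from rfl] at h
    rw [h, t11, t10]; ring
  refine ⟨t, δ, t*δ, t^2*δ, t^4*δ,
    -(t^10*δ) + 4*t^8*δ^2 - 9*t^6*δ^3 + 9*t^4*δ^4 - 3*t^2*δ^5, ?_⟩
  rw [t12]; ring

end

/-- `M` is a sum of `k`-th powers in the matrix ring `M_n(R)`:
there exist finitely many matrices whose `k`-th powers sum to `M`. -/
def IsSumOfKthPowers {n : ℕ} {R : Type*} [CommRing R] (k : ℕ)
    (M : Matrix (Fin n) (Fin n) R) : Prop :=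
  ∃ l : List (Matrix (Fin n) (Fin n) R), M = (l.map (· ^ k)).sum

theorem stmt_13 (R : Type*) [CommRing R] (M : Matrix (Fin 2) (Fin 2) R)
    (h : IsSumOfKthPowers 12 M) :
    ∃ x₀ x₁ x₂ x₃ x₄ x₅ : R,
      M.trace = x₀ ^ 12 + 2 * x₁ ^ 6 - 3 * x₂ ^ 4 - 4 * x₃ ^ 3 + 6 * x₄ ^ 2
        + 12 * x₅ := by
  obtain ⟨l, rfl⟩ := h
  suffices hQ : Qf ((l.map (· ^ 12)).sum.trace) from hQ
  induction l with
  | nil => simpa using Qf_zero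
  | cons A l ih =>
      rw [List.map_cons, List.sum_cons, Matrix.trace_add]
      exact Qf_add (Qf_trace_pow A) ih
end
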